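/- Let N > m > 1, m* = Nm/(N−m), λ > 0, and s₀ ≥ e². Let f : ℝ → ℝ be continuous with f(s) = s^(m*−1)/(log s)^λ for all s ≥ s₀. Then Q is differentiable on (s₀, ∞) with Q'(s) = λ·(N−m)·f(s)/log(s) > 0 for every s > s₀; in particular Q is strictly increasing on [s₀, ∞). -/

import Mathlib

open Set Filter MeasureTheory

noncomputable def phim (m x : ℝ) : ℝ := |x| ^ (m - 2) * x

noncomputable def Fint (f : ℝ → ℝ) (s : ℝ) : ℝ := ∫ t in (0:ℝ)..s, f t

noncomputable def Qfun (N m : ℝ) (f : ℝ → ℝ) (s : ℝ) : ℝ :=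
  m * N * Fint f s - (N - m) * s * f s

/-- `u` (with derivative function `u'`) is a solution of the radial quasilinear
equation on the set `J`. -/
def IsSolutionOn (N m : ℝ) (f : ℝ → ℝ) (J : Set ℝ) (u u' : ℝ → ℝ) : Prop :=
  (∀ r ∈ J, HasDerivWithinAt u (u' r) J r) ∧ ContinuousOn u' J ∧
    ∃ w' : ℝ → ℝ,
      (∀ r ∈ J ∩ Set.Ioi (0:ℝ),
        HasDerivWithinAt (fun t => phim m (u' t)) (w' r) (J ∩ Set.Ioi (0:ℝ)) r) ∧
      ContinuousOn w' (J ∩ Set.Ioi (0:ℝ)) ∧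
      ∀ r ∈ J ∩ Set.Ioi (0:ℝ), w' r + ((N - 1) / r) * phim m (u' r) + f (u r) = 0

def IsIVPSolutionOn (N m : ℝ) (f : ℝ → ℝ) (α : ℝ) (J : Set ℝ) (u u' : ℝ → ℝ) : Prop :=
  IsSolutionOn N m f J u u' ∧ u 0 = α ∧ u' 0 = 0

/-- Admissible domains for the IVP: `[0,∞)` or `[0,R)` with `0 < R`. -/
def IVPDomain (J : Set ℝ) : Prop :=
  J = Set.Ici (0:ℝ) ∨ ∃ R : ℝ, 0 < R ∧ J = Set.Ico (0:ℝ) R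

/-- The solution `u` of the IVP on `J` cannot be extended to a solution on a
strictly larger admissible domain. -/
def Noncontinuable (N m : ℝ) (f : ℝ → ℝ) (α : ℝ) (J : Set ℝ) (u u' : ℝ → ℝ) : Prop :=
  ∀ J' : Set ℝ, IVPDomain J' → J ⊂ J' →
    ¬ ∃ v v' : ℝ → ℝ, IsIVPSolutionOn N m f α J' v v' ∧ Set.EqOn v u J ∧ Set.EqOn v' u' J

open Classical in
/-- The filter describing the approach to the right endpoint of an IVP domain. -/
noncomputable def domEnd (J : Set ℝ) : Filter ℝ :=
  if J = Set.Ici (0:ℝ) then Filter.atTop else nhdsWithin (sSup J) (Set.Iio (sSup J))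

def LocLipschitzOn (f : ℝ → ℝ) (S : Set ℝ) : Prop :=
  ∀ x ∈ S, ∃ ε : ℝ, 0 < ε ∧ ∃ K : NNReal, LipschitzOnWith K f (Metric.ball x ε ∩ S)

/-- Assumption (f₂). -/
structure Hf2 (f : ℝ → ℝ) (βm βp : ℝ) (γm γp : EReal) : Prop where
  hβm : βm < 0
  hβp : 0 < βp
  hFneg : ∀ s : ℝ, s ∈ Set.Ioo βm βp → s ≠ 0 → Fint f s < 0
  hFβm : Fint f βm = 0
  hFβp : Fint f βp = 0
  hγp : (βp : EReal) < γp
  hγm : γm < (βm : EReal)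
  hfpos : ∀ s : ℝ, βp < s → (s : EReal) < γp → 0 < f s
  hfneg : ∀ s : ℝ, γm < (s : EReal) → s < βm → f s < 0
  hγpzero : ∀ s : ℝ, (s : EReal) = γp → f s = 0
  hγmzero : ∀ s : ℝ, (s : EReal) = γm → f s = 0
  hlim : ∃ L : EReal,
    Filter.Tendsto (fun s : ℝ => (Fint f s : EReal))
      (Filter.comap Real.toEReal (nhdsWithin γp (Set.Iio γp))) (nhds L) ∧
    Filter.Tendsto (fun s : ℝ => (Fint f s : EReal))
      (Filter.comap Real.toEReal (nhdsWithin γm (Set.Ioi γm))) (nhds L)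
  hlip : LocLipschitzOn f {s : ℝ | (γm < (s : EReal) ∧ s < 0) ∨ (0 < s ∧ (s : EReal) < γp)}

/-- Assumption (f₃). -/
def Hf3 (N m : ℝ) (f : ℝ → ℝ) (βm βp : ℝ) (γm γp : EReal) : Prop :=
  (γp = ⊤ →
    (∃ βb : ℝ, βp < βb ∧ ∀ s : ℝ, βb ≤ s → 0 ≤ Qfun N m f s) ∧
    (∃ θ : ℝ, θ ∈ Set.Ioo (0:ℝ) 1 ∧
      Filter.Tendsto (fun s : ℝ =>
        sInf ((fun p : ℝ × ℝ =>
          Qfun N m f p.2 * ((|s| ^ (m - 2) * s) / f p.1) ^ (N / m)) ''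
            (Set.Icc (θ * s) s ×ˢ Set.Icc (θ * s) s)))
        Filter.atTop Filter.atTop)) ∧
  (γm = ⊥ →
    (∃ βb : ℝ, -βb < βm ∧ ∀ s : ℝ, s ≤ -βb → 0 ≤ Qfun N m f s) ∧
    (∃ θ : ℝ, θ ∈ Set.Ioo (0:ℝ) 1 ∧
      Filter.Tendsto (fun s : ℝ =>
        sInf ((fun p : ℝ × ℝ =>
          Qfun N m f p.2 * ((|s| ^ (m - 2) * s) / f p.1) ^ (N / m)) ''
            (Set.Icc s (θ * s) ×ˢ Set.Icc s (θ * s))))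
        Filter.atBot Filter.atTop))

/-- Assumption (f₄). -/
def Hf4 (N m : ℝ) (f : ℝ → ℝ) (βm βp : ℝ) (γm γp : EReal) : Prop :=
  (γp ≠ ⊤ → ∃ L₀ : ℝ, 0 < L₀ ∧ ∃ βb : ℝ, βp < βb ∧
    ∀ s : ℝ, βb ≤ s → (s : EReal) < γp → f s ≤ L₀ * (γp.toReal - s) ^ (m - 1)) ∧
  (γm ≠ ⊥ → ∃ L₀ : ℝ, 0 < L₀ ∧ ∃ βb : ℝ, -βm < βb ∧
    ∀ s : ℝ, γm < (s : EReal) → s ≤ -βb → -f s ≤ L₀ * (s - γm.toReal) ^ (m - 1))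

/-- for the log-corrected critical nonlinearity, `Q` is
differentiable with `Q'(s) = λ(N-m) f(s)/log s > 0`, hence strictly increasing. -/
theorem log_critical_example_Q_increasing
    (N m : ℝ) (hm : 1 < m) (hNm : m < N) (lam s₀ : ℝ)
    (hlam : 0 < lam) (hs₀ : Real.exp 2 ≤ s₀)
    (f : ℝ → ℝ) (hf : Continuous f)
    (hfs : ∀ s : ℝ, s₀ ≤ s → f s = s ^ (N * m / (N - m) - 1) / (Real.log s) ^ lam) :
    (∀ s : ℝ, s₀ < s →
      HasDerivAt (Qfun N m f) (lam * (N - m) * f s / Real.log s) s ∧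
      0 < lam * (N - m) * f s / Real.log s) ∧
    StrictMonoOn (Qfun N m f) (Set.Ici s₀) := by
  have hNm' : 0 < N - m := by linarith
  have hs₀1 : (1:ℝ) < s₀ := lt_of_lt_of_le (by
    calc (1:ℝ) = Real.exp 0 := Real.exp_zero.symm
    _ < Real.exp 2 := Real.exp_lt_exp.mpr (by norm_num)) hs₀
  -- FTC: Fint f has derivative f x everywhere
  have hFTC : ∀ x : ℝ, HasDerivAt (Fint f) (f x) x := by
    intro x
    exact intervalIntegral.integral_hasDerivAt_right (hf.intervalIntegrable 0 x)
      (hf.stronglyMeasurableAtFilter _ _) hf.continuousAt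
  set p : ℝ := N * m / (N - m) - 1 with hp
  set q : ℝ := N * m / (N - m) with hq
  have hmain : ∀ s : ℝ, s₀ < s →
      HasDerivAt (Qfun N m f) (lam * (N - m) * f s / Real.log s) s ∧
      0 < lam * (N - m) * f s / Real.log s := by
    intro s hs
    have hs1 : (1:ℝ) < s := hs₀1.trans hs
    have hs0 : (0:ℝ) < s := by linarith
    have hL : 0 < Real.log s := Real.log_pos hs1
    have hLl : 0 < Real.log s ^ lam := Real.rpow_pos_of_pos hL lam
    have hfval : f s = s ^ p / Real.log s ^ lam := hfs s hs.le
    have hfpos : 0 < f s := by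
      rw [hfval]; exact div_pos (Real.rpow_pos_of_pos hs0 p) hLl
    have hpos : 0 < lam * (N - m) * f s / Real.log s := by positivity
    refine ⟨?_, hpos⟩
    -- derivative of t ↦ t ^ q
    have h1 : HasDerivAt (fun t : ℝ => t ^ q) (q * s ^ (q - 1)) s :=
      Real.hasDerivAt_rpow_const (Or.inl hs0.ne')
    have hlog : HasDerivAt Real.log s⁻¹ s := Real.hasDerivAt_log hs0.ne'
    have h2 : HasDerivAt (fun t : ℝ => Real.log t ^ lam)
        (lam * Real.log s ^ (lam - 1) * s⁻¹) s := by
      have := (Real.hasDerivAt_rpow_const (x := Real.log s) (p := lam)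
        (Or.inl hL.ne')).comp s hlog
      simpa [Function.comp_def, mul_comm, mul_assoc] using this
    have h3 := h1.div h2 hLl.ne'
    -- the function t * f t agrees with t ^ q / log t ^ lam near s
    have hev : (fun t : ℝ => t ^ q / Real.log t ^ lam) =ᶠ[nhds s] fun t => t * f t := by
      filter_upwards [eventually_gt_nhds hs] with t ht
      have ht0 : (0:ℝ) < t := by linarith
      rw [hfs t ht.le]
      rw [show q = p + 1 by rw [hp]; ring, Real.rpow_add_one ht0.ne']
      ring
    have hB : HasDerivAt (fun t : ℝ => t * f t)
        ((q * s ^ (q - 1) * Real.log s ^ lam -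
          s ^ q * (lam * Real.log s ^ (lam - 1) * s⁻¹)) / (Real.log s ^ lam) ^ 2) s :=
      h3.congr_of_eventuallyEq hev.symm
    have hQ := ((hFTC s).const_mul (m * N)).sub (hB.const_mul (N - m))
    have hfun : (fun t => m * N * Fint f t - (N - m) * (t * f t)) = Qfun N m f := by
      funext t; simp [Qfun]; ring
    rw [show ((fun y => m * N * Fint f y) - fun y => (N - m) * (y * f y)) = Qfun N m f from hfun] at hQ
    refine hQ.congr_deriv ?_; symm
    -- algebra
    have e1 : s ^ q = s ^ p * s := by
      rw [show q = p + 1 by rw [hp]; ring, Real.rpow_add_one hs0.ne']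
    have e2 : s ^ (q - 1) = s ^ p := by
      rw [show q - 1 = p by rw [hp]]
    have e3 : Real.log s ^ (lam - 1) = Real.log s ^ lam / Real.log s := by
      rw [Real.rpow_sub hL, Real.rpow_one]
    rw [hfval, e1, e2, e3]
    have hqval : (N - m) * q = N * m := by
      rw [hq]; field_simp
    rw [hq]
    field_simp
    ring
  refine ⟨hmain, ?_⟩
  have hcont : ContinuousOn (Qfun N m f) (Set.Ici s₀) := by
    have : Continuous (Qfun N m f) := by
      have hFc : Continuous (Fint f) := by
        rw [continuous_iff_continuousAt]; exact fun x => (hFTC x).continuousAt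
      unfold Qfun
      fun_prop
    exact this.continuousOn
  refine strictMonoOn_of_deriv_pos (convex_Ici s₀) hcont ?_
  intro x hx
  rw [interior_Ici] at hx
  rw [(hmain x hx).1.deriv]
  exact (hmain x hx).2
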